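/- Let (X,d) be a metric space and μ a Borel measure on X that is finite on every bounded Borel set and positive on every nonempty open set, let s > 0, and let M ≥ 1. If ‖A_s f‖_{L^1(μ)} ≤ M ‖f‖_{L^1(μ)} for every f ∈ L^1(μ), then for every p with 1 < p < ∞ and every f ∈ L^p(μ), ‖A_s f‖_{L^p(μ)} ≤ M^{1/p} ‖f‖_{L^p(μ)}. -/

import Mathlib

open MeasureTheory Metric ENNReal

/-- The averaging operator `A_s f(x) = (1/μ(B^cl(x,s))) ∫_{B^cl(x,s)} f dμ`
over closed balls. -/
noncomputable def avgOp {X : Type*} [MetricSpace X] [MeasurableSpace X]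
    (μ : Measure X) (r : ℝ) (f : X → ℝ) (x : X) : ℝ :=
  (μ (closedBall x r)).toReal⁻¹ * ∫ y in closedBall x r, f y ∂μ

/-- If `‖A_s f‖_{L¹} ≤ M ‖f‖_{L¹}` for every `f ∈ L¹(μ)` (with `M ≥ 1`), then for
every `1 < p < ∞` and `f ∈ L^p(μ)`, `‖A_s f‖_{L^p} ≤ M^{1/p} ‖f‖_{L^p}`. -/
theorem stmt10 {X : Type*} [MetricSpace X] [MeasurableSpace X] [BorelSpace X]
    (μ : Measure X)
    (hfin : ∀ s : Set X, Bornology.IsBounded s → μ s < ⊤)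
    (hpos : ∀ U : Set X, IsOpen U → U.Nonempty → 0 < μ U)
    (s : ℝ) (hs : 0 < s) (M : ℝ) (hM : 1 ≤ M)
    (h1 : ∀ f : X → ℝ, Integrable f μ →
      eLpNorm (avgOp μ s f) 1 μ ≤ ENNReal.ofReal M * eLpNorm f 1 μ) :
    ∀ p : ℝ≥0∞, 1 < p → p ≠ ⊤ → ∀ f : X → ℝ, MemLp f p μ →
      eLpNorm (avgOp μ s f) p μ
        ≤ ENNReal.ofReal (M ^ (1 / p.toReal)) * eLpNorm f p μ := by
  intro p hp hpt f hf
  have hp0 : p ≠ 0 := by positivity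
  set pr := p.toReal with hprdef
  have hpr1 : 1 < pr := by
    rw [hprdef, ← ENNReal.toReal_one]
    exact ENNReal.toReal_lt_toReal (by simp) hpt |>.mpr hp
  have hpr0 : 0 < pr := lt_trans one_pos hpr1
  set g : X → ℝ := fun y => ‖f y‖ ^ pr with hgdef
  have hg_nonneg : ∀ y, 0 ≤ g y := fun y => Real.rpow_nonneg (norm_nonneg _) _
  have hg_int : Integrable g μ := hf.integrable_norm_rpow hp0 hpt
  -- pointwise key inequality
  have key : ∀ x, (‖avgOp μ s f x‖₊ : ℝ≥0∞) ^ pr ≤ ENNReal.ofReal (avgOp μ s g x) := by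
    intro x
    set B := closedBall x s with hB
    have hc0 : μ B ≠ 0 := by
      refine ((hpos (ball x s) isOpen_ball ⟨x, mem_ball_self hs⟩).trans_le
        (measure_mono ball_subset_closedBall)).ne'
    have hct : μ B ≠ ⊤ := (hfin B isBounded_closedBall).ne
    set ν : Measure X := (μ B)⁻¹ • μ.restrict B with hν
    have hprob : IsProbabilityMeasure ν := by
      constructor
      simp [hν, Measure.restrict_apply_univ, ENNReal.inv_mul_cancel hc0 hct]
    have hνf : MemLp f p ν :=
      (hf.restrict B).smul_measure (by simp [hc0])
    have hfi : Integrable f ν := hνf.integrable (le_of_lt hp)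
    have hgi : Integrable g ν := hνf.integrable_norm_rpow hp0 hpt
    have e1 : avgOp μ s f x = ∫ y, f y ∂ν := by
      simp [avgOp, hν, integral_smul_measure, ENNReal.toReal_inv, smul_eq_mul, hB]
    have e2 : avgOp μ s g x = ∫ y, g y ∂ν := by
      simp [avgOp, hν, integral_smul_measure, ENNReal.toReal_inv, smul_eq_mul, hB]
    -- compare eLpNorms over ν
    have mono : eLpNorm f 1 ν ≤ eLpNorm f p ν :=
      eLpNorm_le_eLpNorm_of_exponent_le (le_of_lt hp) hνf.1
    have h1ν : eLpNorm f 1 ν = ∫⁻ y, ‖f y‖₊ ∂ν := eLpNorm_one_eq_lintegral_enorm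
    have hpν : eLpNorm f p ν = (∫⁻ y, (‖f y‖₊ : ℝ≥0∞) ^ pr ∂ν) ^ (1 / pr) := by
      exact eLpNorm_eq_lintegral_rpow_enorm_toReal hp0 hpt
    have step1 : ENNReal.ofReal ‖avgOp μ s f x‖ ≤ ∫⁻ y, ‖f y‖₊ ∂ν := by
      rw [e1]
      calc ENNReal.ofReal ‖∫ y, f y ∂ν‖
          ≤ ENNReal.ofReal (∫ y, ‖f y‖ ∂ν) :=
            ENNReal.ofReal_le_ofReal (norm_integral_le_integral_norm f)
        _ = ∫⁻ y, ‖f y‖₊ ∂ν := ofReal_integral_norm_eq_lintegral_enorm hfi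
    have step2 : (∫⁻ y, ‖f y‖₊ ∂ν) ^ pr ≤ ∫⁻ y, (‖f y‖₊ : ℝ≥0∞) ^ pr ∂ν := by
      have := ENNReal.rpow_le_rpow (h1ν ▸ hpν ▸ mono) (le_of_lt hpr0)
      rwa [← ENNReal.rpow_mul, one_div, inv_mul_cancel₀ hpr0.ne', ENNReal.rpow_one] at this
    have step3 : ∫⁻ y, (‖f y‖₊ : ℝ≥0∞) ^ pr ∂ν = ENNReal.ofReal (avgOp μ s g x) := by
      rw [e2, ofReal_integral_eq_lintegral_ofReal hgi (Filter.Eventually.of_forall hg_nonneg)]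
      refine lintegral_congr fun y => ?_
      rw [hgdef, ← ENNReal.ofReal_rpow_of_nonneg (norm_nonneg _) (le_of_lt hpr0),
        ofReal_norm, enorm_eq_nnnorm]
    calc (‖avgOp μ s f x‖₊ : ℝ≥0∞) ^ pr
        = (ENNReal.ofReal ‖avgOp μ s f x‖) ^ pr := by rw [ofReal_norm, enorm_eq_nnnorm]
      _ ≤ (∫⁻ y, ‖f y‖₊ ∂ν) ^ pr := ENNReal.rpow_le_rpow step1 (le_of_lt hpr0)
      _ ≤ ∫⁻ y, (‖f y‖₊ : ℝ≥0∞) ^ pr ∂ν := step2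
      _ = ENNReal.ofReal (avgOp μ s g x) := step3
  -- now the global estimate
  have main : eLpNorm (avgOp μ s f) p μ ^ pr ≤ ENNReal.ofReal M * eLpNorm f p μ ^ pr := by
    have lhs_eq : eLpNorm (avgOp μ s f) p μ ^ pr
        = ∫⁻ x, (‖avgOp μ s f x‖₊ : ℝ≥0∞) ^ pr ∂μ := by
      rw [eLpNorm_eq_lintegral_rpow_enorm_toReal hp0 hpt, ← ENNReal.rpow_mul, one_div,
        inv_mul_cancel₀ hpr0.ne', ENNReal.rpow_one]
      rfl
    have rhs_eq : eLpNorm g 1 μ = eLpNorm f p μ ^ pr := by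
      rw [eLpNorm_one_eq_lintegral_enorm, eLpNorm_eq_lintegral_rpow_enorm_toReal hp0 hpt,
        ← ENNReal.rpow_mul, one_div, inv_mul_cancel₀ hpr0.ne', ENNReal.rpow_one]
      refine lintegral_congr fun y => ?_
      rw [← ofReal_norm (g y), hgdef, Real.norm_of_nonneg (hg_nonneg y),
        ← ENNReal.ofReal_rpow_of_nonneg (norm_nonneg _) (le_of_lt hpr0),
        ofReal_norm]
    calc eLpNorm (avgOp μ s f) p μ ^ pr
        = ∫⁻ x, (‖avgOp μ s f x‖₊ : ℝ≥0∞) ^ pr ∂μ := lhs_eq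
      _ ≤ ∫⁻ x, ENNReal.ofReal (avgOp μ s g x) ∂μ := lintegral_mono key
      _ ≤ ∫⁻ x, (‖avgOp μ s g x‖₊ : ℝ≥0∞) ∂μ :=
          lintegral_mono fun x => Real.ofReal_le_enorm _
      _ = eLpNorm (avgOp μ s g) 1 μ := (eLpNorm_one_eq_lintegral_enorm (f := avgOp μ s g)).symm
      _ ≤ ENNReal.ofReal M * eLpNorm g 1 μ := h1 g hg_int
      _ = ENNReal.ofReal M * eLpNorm f p μ ^ pr := by rw [rhs_eq]
  have final := ENNReal.rpow_le_rpow main (le_of_lt (by positivity : (0:ℝ) < 1 / pr))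
  rw [← ENNReal.rpow_mul, mul_one_div, div_self hpr0.ne', ENNReal.rpow_one,
    ENNReal.mul_rpow_of_nonneg _ _ (by positivity), ← ENNReal.rpow_mul,
    mul_one_div, div_self hpr0.ne', ENNReal.rpow_one,
    ENNReal.ofReal_rpow_of_pos (lt_of_lt_of_le one_pos hM)] at final
  exact final
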